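/- Let R₁ : ℝ → ℝ be differentiable at 1 with R₁(1) = R* where R* < d/(m+n), and define the controlled vector field ψ(x) = (x(1−x)/(m+n·x))·(R₁(x) − d/(m+n·x)). Then ψ is differentiable at x = 1 and ψ'(1) = −(1/(m+n))·(R* − d/(m+n)) > 0; in particular the equilibrium x = 1 of ẋ = ψ(x) remains unstable, so x = 1 cannot be stabilized by any such state feedback reward controller when R* < d/(m+n). -/

import Mathlib

/-- With any state feedback reward R₁ differentiable at 1 with
R₁(1) = R* < d/(m+n), the controlled vector field ψ has ψ'(1) = −(1/(m+n))(R* − d/(m+n)) > 0,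
so the equilibrium x = 1 remains unstable. -/
theorem stmt_15 (m n : ℕ) (hm : 0 < m) (hn : 0 < n) (d Rstar : ℝ) (hd : 0 < d)
    (R₁ : ℝ → ℝ) (hdiff : DifferentiableAt ℝ R₁ 1) (hR1 : R₁ 1 = Rstar)
    (hRs : Rstar < d / ((m : ℝ) + n)) :
    HasDerivAt
      (fun x : ℝ => (x * (1 - x) / ((m : ℝ) + n * x)) * (R₁ x - d / ((m : ℝ) + n * x)))
      (-(1 / ((m : ℝ) + n)) * (Rstar - d / ((m : ℝ) + n))) 1 ∧
    0 < -(1 / ((m : ℝ) + n)) * (Rstar - d / ((m : ℝ) + n)) := by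
  have hmn : (0:ℝ) < (m : ℝ) + n := by positivity
  have hden : ((m : ℝ) + n * 1) ≠ 0 := by push_cast; nlinarith
  constructor
  · have hnum : HasDerivAt (fun x : ℝ => x * (1 - x)) (-1 : ℝ) 1 := by
      have := (hasDerivAt_id (1:ℝ)).fun_mul ((hasDerivAt_const (1:ℝ) (1:ℝ)).fun_sub (hasDerivAt_id 1))
      exact this.congr_deriv (by norm_num)
    have hD : HasDerivAt (fun x : ℝ => (m : ℝ) + n * x) (n : ℝ) 1 := by
      have := (hasDerivAt_const (1:ℝ) ((m:ℝ))).fun_add ((hasDerivAt_id (1:ℝ)).const_mul (n:ℝ))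
      simpa using this
    have hf : HasDerivAt (fun x : ℝ => x * (1 - x) / ((m : ℝ) + n * x))
        (-(1 / ((m : ℝ) + n))) 1 := by
      have := hnum.div hD hden
      refine this.congr_deriv ?_
      field_simp
      ring
    have hg : HasDerivAt (fun x : ℝ => R₁ x - d / ((m : ℝ) + n * x))
        (deriv R₁ 1 - (-(d * n) / ((m : ℝ) + n * 1)^2)) 1 := by
      have hdd : HasDerivAt (fun x : ℝ => d / ((m : ℝ) + n * x))
          ((0 * ((m:ℝ) + n * 1) - d * n) / ((m : ℝ) + n * 1)^2) 1 :=
        (hasDerivAt_const (1:ℝ) d).div (by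
          have := (hasDerivAt_const (1:ℝ) ((m:ℝ))).fun_add ((hasDerivAt_id (1:ℝ)).const_mul (n:ℝ))
          simpa using this) hden
      have := hdiff.hasDerivAt.fun_sub hdd
      refine this.congr_deriv ?_
      ring
    have := hf.fun_mul hg
    refine this.congr_deriv ?_
    have h1 : (1 : ℝ) * (1 - 1) / ((m : ℝ) + n * 1) = 0 := by ring
    rw [h1, hR1]
    push_cast
    ring
  · have : Rstar - d / ((m : ℝ) + n) < 0 := by linarith
    have h2 : 0 < 1 / ((m : ℝ) + n) := by positivity
    nlinarith
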